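/- Let X, Z ∈ ℝ^{d×r} satisfy ‖XXᵀ − ZZᵀ‖_F ≤ ρ·λ_min(ZᵀZ) with ρ < 1/2, and let f(X) = ‖XXᵀ − ZZᵀ‖_F². Then (‖∇f(X)‖_X*)² ≤ 16·f(X), where ‖V‖_X* = ‖V(XᵀX)^{−1/2}‖_F. -/

import Mathlib

open Matrix BigOperators

noncomputable section

/-- Frobenius norm of a real matrix. -/
def frob {m n : ℕ} (A : Matrix (Fin m) (Fin n) ℝ) : ℝ :=
  Real.sqrt (∑ i, ∑ j, (A i j) ^ 2)

/-- Trace inner product `⟨A,B⟩ = tr(AᵀB)`. -/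
def mip {m n : ℕ} (A B : Matrix (Fin m) (Fin n) ℝ) : ℝ := (Aᵀ * B).trace

open Classical in
/-- Smallest eigenvalue of a Hermitian matrix (junk value 0 otherwise). -/
def lammin {n : ℕ} (M : Matrix (Fin n) (Fin n) ℝ) : ℝ :=
  if h : M.IsHermitian then ⨅ i, h.eigenvalues i else 0

open scoped ComplexOrder in
/-- The positive semidefinite square root of a positive semidefinite matrix (the definition
that Mathlib's `Matrix.PosSemidef.sqrt` had in the older library; it has since been removed). -/
def Matrix.PosSemidef.sqrt {n : Type*} [Fintype n] [DecidableEq n] {𝕜 : Type*} [RCLike 𝕜]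
    {A : Matrix n n 𝕜} (hA : A.PosSemidef) : Matrix n n 𝕜 :=
  (hA.1.eigenvectorUnitary : Matrix n n 𝕜) *
  diagonal (((↑) : ℝ → 𝕜) ∘ Real.sqrt ∘ hA.1.eigenvalues) *
  (star hA.1.eigenvectorUnitary : Matrix n n 𝕜)

/-- Local norm `‖V‖_X = ‖V (XᵀX)^{1/2}‖_F`. -/
def locNorm {d r : ℕ} (X V : Matrix (Fin d) (Fin r) ℝ) : ℝ :=
  frob (V * (Matrix.posSemidef_conjTranspose_mul_self X).sqrt)

/-- Dual local norm `‖V‖_X* = ‖V (XᵀX)^{-1/2}‖_F`. -/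
def dualNorm {d r : ℕ} (X V : Matrix (Fin d) (Fin r) ℝ) : ℝ :=
  frob (V * ((Matrix.posSemidef_conjTranspose_mul_self X).sqrt)⁻¹)

/-- Leverage score / coherence `g_k(X) = e_kᵀ X (XᵀX)⁻¹ Xᵀ e_k`. -/
def lev {d r : ℕ} (k : Fin d) (X : Matrix (Fin d) (Fin r) ℝ) : ℝ :=
  (X * (Xᴴ * X)⁻¹ * Xᴴ) k k

/-- Gradient of the leverage score `∇g_k(X)`. -/
def levGrad {d r : ℕ} (k : Fin d) (X : Matrix (Fin d) (Fin r) ℝ) :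
    Matrix (Fin d) (Fin r) ℝ :=
  (2 : ℝ) • ((1 - X * (Xᴴ * X)⁻¹ * Xᴴ) * Matrix.single k k (1 : ℝ) * X * (Xᴴ * X)⁻¹)

/-- Stochastic gradient sample `SG(X)` for the index pair `(i,j)`. -/
def SG {d r : ℕ} (X Z : Matrix (Fin d) (Fin r) ℝ) (i j : Fin d) :
    Matrix (Fin d) (Fin r) ℝ :=
  (2 * (d : ℝ) ^ 2 * ((X * Xᴴ - Z * Zᴴ) i j)) •
    ((Matrix.single i j (1 : ℝ) + Matrix.single j i (1 : ℝ)) * X)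

lemma psd_sqrt_isHermitian' {r : ℕ} {A : Matrix (Fin r) (Fin r) ℝ} (hA : A.PosSemidef) :
    hA.sqrt.IsHermitian := by
  unfold Matrix.PosSemidef.sqrt
  rw [Matrix.star_eq_conjTranspose]
  exact isHermitian_mul_mul_conjTranspose _ (isHermitian_diagonal _)

lemma psd_sqrt_mul_self' {r : ℕ} {A : Matrix (Fin r) (Fin r) ℝ} (hA : A.PosSemidef) :
    hA.sqrt * hA.sqrt = A := by
  unfold Matrix.PosSemidef.sqrt
  have hU : (star hA.1.eigenvectorUnitary : Matrix (Fin r) (Fin r) ℝ) *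
      (hA.1.eigenvectorUnitary : Matrix (Fin r) (Fin r) ℝ) = 1 :=
    Unitary.coe_star_mul_self _
  have hD : diagonal ((RCLike.ofReal : ℝ → ℝ) ∘ Real.sqrt ∘ hA.1.eigenvalues) *
      diagonal ((RCLike.ofReal : ℝ → ℝ) ∘ Real.sqrt ∘ hA.1.eigenvalues) =
      diagonal (RCLike.ofReal ∘ hA.1.eigenvalues) := by
    rw [diagonal_mul_diagonal]
    congr 1
    funext i
    simp [Real.mul_self_sqrt (hA.eigenvalues_nonneg i)]
  conv_rhs => rw [hA.1.spectral_theorem, Unitary.conjStarAlgAut_apply]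
  rw [← hD]
  simp only [Matrix.mul_assoc]
  rw [← Matrix.mul_assoc (star (hA.1.eigenvectorUnitary : Matrix (Fin r) (Fin r) ℝ))
    (hA.1.eigenvectorUnitary : Matrix (Fin r) (Fin r) ℝ), hU, Matrix.one_mul]

lemma trace_conjTranspose_mul_self {m n : ℕ} (A : Matrix (Fin m) (Fin n) ℝ) :
    (Aᴴ * A).trace = ∑ i, ∑ j, (A i j) ^ 2 := by
  simp only [Matrix.trace, Matrix.diag, Matrix.mul_apply, Matrix.conjTranspose_apply,
    star_trivial, ← sq]
  exact Finset.sum_comm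

lemma frob_sq {m n : ℕ} (A : Matrix (Fin m) (Fin n) ℝ) :
    frob A ^ 2 = (Aᴴ * A).trace := by
  rw [trace_conjTranspose_mul_self, frob, Real.sq_sqrt]
  exact Finset.sum_nonneg fun i _ => Finset.sum_nonneg fun j _ => sq_nonneg _

lemma trace_conjTranspose_mul_self_nonneg {m n : ℕ} (A : Matrix (Fin m) (Fin n) ℝ) :
    0 ≤ (Aᴴ * A).trace := by
  rw [trace_conjTranspose_mul_self]
  exact Finset.sum_nonneg fun i _ => Finset.sum_nonneg fun j _ => sq_nonneg _

/-- Upper bound on the dual local norm of the gradient: `(‖∇f(X)‖_X*)² ≤ 16 f(X)`. -/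
theorem grad_dualNorm_upper {d r : ℕ} (X Z : Matrix (Fin d) (Fin r) ℝ) (ρ : ℝ)
    (hρ : ρ < 1 / 2)
    (h : frob (X * Xᴴ - Z * Zᴴ) ≤ ρ * lammin (Zᴴ * Z)) :
    dualNorm X ((4 : ℝ) • ((X * Xᴴ - Z * Zᴴ) * X)) ^ 2
      ≤ 16 * frob (X * Xᴴ - Z * Zᴴ) ^ 2 := by
  set E : Matrix (Fin d) (Fin d) ℝ := X * Xᴴ - Z * Zᴴ with hE
  set S : Matrix (Fin r) (Fin r) ℝ := (Matrix.posSemidef_conjTranspose_mul_self X).sqrt with hS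
  have hSh : S.IsHermitian :=
    psd_sqrt_isHermitian' (Matrix.posSemidef_conjTranspose_mul_self X)
  have hSS : S * S = Xᴴ * X := psd_sqrt_mul_self' (Matrix.posSemidef_conjTranspose_mul_self X)
  have key : frob (E * (X * S⁻¹)) ^ 2 ≤ frob E ^ 2 := by
    by_cases hdet : IsUnit (Xᴴ * X).det
    · -- invertible case
      have hSdet : IsUnit S.det := by
        rw [← hSS, Matrix.det_mul] at hdet
        exact isUnit_of_mul_isUnit_left hdet
      set M : Matrix (Fin d) (Fin r) ℝ := X * S⁻¹ with hM
      have hinv : (S⁻¹)ᴴ = S⁻¹ := by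
        rw [Matrix.conjTranspose_nonsing_inv, hSh.eq]
      have hMM : Mᴴ * M = 1 := by
        calc Mᴴ * M = S⁻¹ * (Xᴴ * X * S⁻¹) := by
              rw [hM, Matrix.conjTranspose_mul, hinv]
              simp only [Matrix.mul_assoc]
          _ = S⁻¹ * (S * (S * S⁻¹)) := by rw [← hSS, Matrix.mul_assoc]
          _ = 1 := by rw [Matrix.mul_nonsing_inv _ hSdet, Matrix.mul_one,
                Matrix.nonsing_inv_mul _ hSdet]
      set P : Matrix (Fin d) (Fin d) ℝ := M * Mᴴ with hP
      have hPh : Pᴴ = P := by rw [hP, Matrix.conjTranspose_mul, Matrix.conjTranspose_conjTranspose]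
      have hPP : P * P = P := by
        rw [hP, Matrix.mul_assoc, ← Matrix.mul_assoc Mᴴ, hMM, Matrix.one_mul]
      set Q : Matrix (Fin d) (Fin d) ℝ := 1 - P with hQ
      have hQh : Qᴴ = Q := by rw [hQ, Matrix.conjTranspose_sub, hPh, Matrix.conjTranspose_one]
      have hQQ : Q * Q = Q := by
        have h0 : Q * Q = 1 - P - (P - P) := by
          rw [hQ, Matrix.sub_mul, Matrix.one_mul, Matrix.mul_sub, Matrix.mul_one, hPP]
        rw [h0, hQ]
        abel
      rw [frob_sq, frob_sq]
      have h1 : ((E * M)ᴴ * (E * M)).trace = ((Eᴴ * E) * P).trace := by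
        rw [Matrix.conjTranspose_mul, Matrix.mul_assoc, Matrix.trace_mul_comm Mᴴ, hP]
        simp only [Matrix.mul_assoc]
      have h2 : 0 ≤ ((Eᴴ * E) * Q).trace := by
        have h3 : ((Eᴴ * E) * Q).trace = ((E * Q)ᴴ * (E * Q)).trace := by
          conv_lhs => rw [← hQQ, ← Matrix.mul_assoc, Matrix.trace_mul_comm]
          rw [Matrix.conjTranspose_mul, hQh]
          simp only [Matrix.mul_assoc]
        rw [h3]
        exact trace_conjTranspose_mul_self_nonneg _
      have h4 : ((Eᴴ * E) * Q).trace = (Eᴴ * E).trace - ((Eᴴ * E) * P).trace := by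
        rw [hQ, Matrix.mul_sub, Matrix.mul_one, Matrix.trace_sub]
      rw [h1]
      linarith
    · -- singular case: S⁻¹ = 0
      have hSdet : ¬ IsUnit S.det := by
        intro hu
        exact hdet (by rw [← hSS, Matrix.det_mul]; exact hu.mul hu)
      rw [Matrix.nonsing_inv_apply_not_isUnit _ hSdet, Matrix.mul_zero, Matrix.mul_zero]
      have h0 : frob (0 : Matrix (Fin d) (Fin r) ℝ) = 0 := by simp [frob]
      rw [h0]
      simpa using sq_nonneg (frob E)
  have hrw : dualNorm X ((4 : ℝ) • (E * X)) ^ 2 = 16 * frob (E * (X * S⁻¹)) ^ 2 := by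
    have hmul : ((4 : ℝ) • (E * X)) * S⁻¹ = (4 : ℝ) • (E * (X * S⁻¹)) := by
      rw [Matrix.smul_mul, Matrix.mul_assoc]
    rw [dualNorm, hmul, frob_sq, frob_sq, Matrix.conjTranspose_smul, Matrix.smul_mul,
      Matrix.mul_smul, Matrix.trace_smul, Matrix.trace_smul]
    simp only [star_trivial, smul_eq_mul]
    ring
  rw [hrw]
  linarith
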